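/- Let Y have MGF φ_Y with φ_Y(2x) − (φ_Y(x/2))² > 0 for a given x > 0, and suppose x satisfies φ_Y(9x/2) − 3φ_Y(x/2)φ_Y(2x) + 2(φ_Y(x/2))³ = η·(φ_Y(2x) − (φ_Y(x/2))²)^{3/2} for some η > 0. Define s = √x, m = (1/2)·ln(σ²/(φ_Y(2x) − (φ_Y(x/2))²)), τ = μ − σ·φ_Y(x/2)/(φ_Y(2x) − (φ_Y(x/2))²)^{1/2}, for given μ ∈ ℝ, σ > 0. Then for N standard normal independent of Y, W = e^{s√Y·N+m} + τ satisfies E[W] = μ, Var(W) = σ², and E[(W−μ)³]/σ³ = η, provided φ_Y(9x/2) < ∞. -/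

import Mathlib

open MeasureTheory ProbabilityTheory Real

lemma gauss_aux (b : ℝ) :
    Integrable (fun n => rexp (b * n)) (gaussianReal 0 1) ∧
    ∫ n, rexp (b * n) ∂(gaussianReal 0 1) = rexp (b ^ 2 / 2) := by
  have h1 : (1 : NNReal) ≠ 0 := one_ne_zero
  have hmeas : Measurable fun x => (gaussianPDFReal 0 1 x).toNNReal :=
    (measurable_gaussianPDFReal 0 1).real_toNNReal
  have hd : gaussianReal 0 1
      = volume.withDensity fun x => ((gaussianPDFReal 0 1 x).toNNReal : ENNReal) := by
    rw [gaussianReal_of_var_ne_zero 0 h1]; rfl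
  have hkey : ∀ n, gaussianPDFReal 0 1 n * rexp (b * n)
      = rexp (b ^ 2 / 2) * gaussianPDFReal b 1 n := by
    intro n
    simp only [gaussianPDFReal, NNReal.coe_one, mul_one, sub_zero]
    rw [mul_assoc, ← Real.exp_add, mul_left_comm, ← Real.exp_add]
    congr 1
    ring
  have hint : Integrable (fun n => gaussianPDFReal 0 1 n * rexp (b * n)) volume := by
    have := (integrable_gaussianPDFReal b 1).const_mul (rexp (b ^ 2 / 2))
    exact this.congr (ae_of_all _ fun n => (hkey n).symm)
  have hsmul : (fun a => ((gaussianPDFReal 0 1 a).toNNReal : ℝ) • rexp (b * a))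
      = fun n => gaussianPDFReal 0 1 n * rexp (b * n) := by
    funext a
    rw [smul_eq_mul, Real.coe_toNNReal _ (gaussianPDFReal_nonneg _ _ _)]
  constructor
  · rw [hd, integrable_withDensity_iff_integrable_smul hmeas]
    simpa only [NNReal.smul_def, hsmul] using hint
  · rw [hd, integral_withDensity_eq_integral_smul hmeas]
    simp only [NNReal.smul_def]
    rw [hsmul]
    simp only [hkey]
    rw [integral_const_mul, integral_gaussianPDFReal_eq_one b h1, mul_one]

lemma core_aux {Ω : Type*} [MeasurableSpace Ω] (P : Measure Ω) [IsProbabilityMeasure P]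
    (Y N : Ω → ℝ) (hY : Measurable Y) (hNmeas : Measurable N)
    (hYpos : ∀ᵐ ω ∂P, 0 ≤ Y ω)
    (hindep : IndepFun Y N P)
    (hN : Measure.map N P = gaussianReal 0 1)
    (c t : ℝ) (hct : c ^ 2 / 2 = t)
    (hint : Integrable (fun ω => rexp (t * Y ω)) P) :
    Integrable (fun ω => rexp (c * Real.sqrt (Y ω) * N ω)) P ∧
    ∫ ω, rexp (c * Real.sqrt (Y ω) * N ω) ∂P = mgf Y P t := by
  have hmap : P.map (fun ω => (Y ω, N ω)) = (P.map Y).prod (gaussianReal 0 1) := by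
    rw [← hN]
    exact (indepFun_iff_map_prod_eq_prod_map_map hY.aemeasurable hNmeas.aemeasurable).mp hindep
  have hYae : ∀ᵐ y ∂(P.map Y), 0 ≤ y := by
    rw [ae_map_iff hY.aemeasurable measurableSet_Ici]
    exact hYpos
  have : IsProbabilityMeasure (P.map Y) := Measure.isProbabilityMeasure_map hY.aemeasurable
  set g : ℝ × ℝ → ℝ := fun p => rexp (c * Real.sqrt p.1 * p.2) with hg
  have g_meas : Measurable g := by
    apply Measurable.exp
    exact ((measurable_fst.sqrt.const_mul c)).mul measurable_snd
  have hexp_meas : Measurable fun y : ℝ => rexp (t * y) :=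
    (measurable_id.const_mul t).exp
  have hIm : Integrable (fun y => rexp (t * y)) (P.map Y) := by
    rw [integrable_map_measure hexp_meas.aestronglyMeasurable hY.aemeasurable]
    exact hint
  have hinner : ∀ᵐ y ∂(P.map Y),
      ∫ n, rexp (c * Real.sqrt y * n) ∂(gaussianReal 0 1) = rexp (t * y) := by
    filter_upwards [hYae] with y hy
    rw [(gauss_aux (c * Real.sqrt y)).2]
    congr 1
    rw [mul_pow, Real.sq_sqrt hy, ← hct]
    ring
  have hint_g : Integrable g ((P.map Y).prod (gaussianReal 0 1)) := by
    rw [integrable_prod_iff g_meas.aestronglyMeasurable]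
    constructor
    · exact ae_of_all _ fun y => (gauss_aux (c * Real.sqrt y)).1
    · apply hIm.congr
      filter_upwards [hinner] with y hy
      rw [← hy]
      congr 1
      funext n
      exact (Real.norm_of_nonneg (Real.exp_pos _).le).symm
  have hpair : Measurable fun ω => (Y ω, N ω) := hY.prodMk hNmeas
  constructor
  · exact (integrable_map_measure g_meas.aestronglyMeasurable hpair.aemeasurable).mp
      (hmap ▸ hint_g)
  · calc ∫ ω, rexp (c * Real.sqrt (Y ω) * N ω) ∂P
        = ∫ p, g p ∂(P.map fun ω => (Y ω, N ω)) := by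
          rw [integral_map hpair.aemeasurable g_meas.aestronglyMeasurable]
      _ = ∫ y, ∫ n, rexp (c * Real.sqrt y * n) ∂(gaussianReal 0 1) ∂(P.map Y) := by
          rw [hmap, integral_prod g hint_g]
      _ = ∫ y, rexp (t * y) ∂(P.map Y) := integral_congr_ae hinner
      _ = ∫ ω, rexp (t * Y ω) ∂P := by
          rw [integral_map hY.aemeasurable hexp_meas.aestronglyMeasurable]
      _ = mgf Y P t := rfl

/-- Moment matching for the time-changed model: with `x > 0` solving the
moment-matching equation, `s = √x`, `m = ½ ln(σ²/(φ_Y(2x) − φ_Y(x/2)²))`,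
`τ = μ − σ φ_Y(x/2)/(φ_Y(2x) − φ_Y(x/2)²)^{1/2}`, the variable
`W = e^{s√Y·N+m} + τ` has mean `μ`, variance `σ²`, and skewness `η`. -/
theorem mixed_moment_match
    {Ω : Type*} [MeasurableSpace Ω] (P : Measure Ω) [IsProbabilityMeasure P]
    (Y N : Ω → ℝ) (hY : Measurable Y) (hNmeas : Measurable N)
    (hYpos : ∀ᵐ ω ∂P, 0 ≤ Y ω)
    (hindep : IndepFun Y N P)
    (hN : Measure.map N P = gaussianReal 0 1)
    (μ σ η x : ℝ) (hσ : 0 < σ) (hη : 0 < η) (hx : 0 < x)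
    (hint1 : Integrable (fun ω => Real.exp (x / 2 * Y ω)) P)
    (hint2 : Integrable (fun ω => Real.exp (2 * x * Y ω)) P)
    (hint3 : Integrable (fun ω => Real.exp (9 * x / 2 * Y ω)) P)
    (hpos : 0 < mgf Y P (2 * x) - (mgf Y P (x / 2)) ^ 2)
    (heq : mgf Y P (9 * x / 2) - 3 * mgf Y P (x / 2) * mgf Y P (2 * x)
        + 2 * (mgf Y P (x / 2)) ^ 3
      = η * (mgf Y P (2 * x) - (mgf Y P (x / 2)) ^ 2) ^ ((3 : ℝ) / 2))
    (s m τ : ℝ)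
    (hs : s = Real.sqrt x)
    (hm : m = (1 / 2)
        * Real.log (σ ^ 2 / (mgf Y P (2 * x) - (mgf Y P (x / 2)) ^ 2)))
    (hτ : τ = μ - σ * mgf Y P (x / 2)
        / (mgf Y P (2 * x) - (mgf Y P (x / 2)) ^ 2) ^ ((1 : ℝ) / 2)) :
    (∫ ω, (Real.exp (s * Real.sqrt (Y ω) * N ω + m) + τ) ∂P) = μ ∧
    (∫ ω, (Real.exp (s * Real.sqrt (Y ω) * N ω + m) + τ - μ) ^ 2 ∂P) = σ ^ 2 ∧
    (∫ ω, (Real.exp (s * Real.sqrt (Y ω) * N ω + m) + τ - μ) ^ 3 ∂P) / σ ^ 3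
      = η := by
  set φ1 := mgf Y P (x / 2) with hφ1
  set φ2 := mgf Y P (2 * x) with hφ2
  set φ3 := mgf Y P (9 * x / 2) with hφ3
  set d := φ2 - φ1 ^ 2 with hdd
  set D := Real.sqrt d with hDdef
  have hD : 0 < D := Real.sqrt_pos.mpr hpos
  have hDne : D ≠ 0 := ne_of_gt hD
  have hD2 : D ^ 2 = φ2 - φ1 ^ 2 := Real.sq_sqrt hpos.le
  have hsx : s ^ 2 = x := by rw [hs]; exact Real.sq_sqrt hx.le
  obtain ⟨J1, I1⟩ := core_aux P Y N hY hNmeas hYpos hindep hN s (x / 2)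
    (by rw [hsx]) hint1
  obtain ⟨J2, I2⟩ := core_aux P Y N hY hNmeas hYpos hindep hN (2 * s) (2 * x)
    (by rw [mul_pow, hsx]; ring) hint2
  obtain ⟨J3, I3⟩ := core_aux P Y N hY hNmeas hYpos hindep hN (3 * s) (9 * x / 2)
    (by rw [mul_pow, hsx]; ring) hint3
  have hAm : rexp m = σ / D := by
    have hq : (0 : ℝ) < σ ^ 2 / d := div_pos (pow_pos hσ 2) hpos
    rw [hm, mul_comm, ← Real.rpow_def_of_pos hq, ← Real.sqrt_eq_rpow,
      Real.sqrt_div (sq_nonneg σ) d, Real.sqrt_sq hσ.le]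
  have hτ' : τ = μ - rexp m * φ1 := by
    rw [hτ, hAm, ← Real.sqrt_eq_rpow, ← hDdef]
    ring
  have hD3 : d ^ ((3 : ℝ) / 2) = D ^ 3 := by
    have h1 : d ^ ((3 : ℝ) / 2) = (d ^ ((1 : ℝ) / 2)) ^ (3 : ℕ) := by
      rw [← Real.rpow_natCast (d ^ ((1 : ℝ) / 2)) 3, ← Real.rpow_mul hpos.le]
      norm_num
    rw [h1, ← Real.sqrt_eq_rpow]
  rw [hD3] at heq
  have e2 : ∀ ω, rexp (2 * s * Real.sqrt (Y ω) * N ω)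
      = rexp (s * Real.sqrt (Y ω) * N ω) ^ 2 := by
    intro ω; rw [sq, ← Real.exp_add]; congr 1; ring
  have e3 : ∀ ω, rexp (3 * s * Real.sqrt (Y ω) * N ω)
      = rexp (s * Real.sqrt (Y ω) * N ω) ^ 3 := by
    intro ω
    rw [show rexp (s * Real.sqrt (Y ω) * N ω) ^ 3
      = rexp (s * Real.sqrt (Y ω) * N ω + (s * Real.sqrt (Y ω) * N ω
        + s * Real.sqrt (Y ω) * N ω)) by rw [Real.exp_add, Real.exp_add]; ring]
    congr 1; ring
  refine ⟨?_, ?_, ?_⟩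
  · have hfun : (fun ω => rexp (s * Real.sqrt (Y ω) * N ω + m) + τ)
        = fun ω => rexp m * rexp (s * Real.sqrt (Y ω) * N ω) + τ := by
      funext ω; rw [Real.exp_add]; ring
    have K1 : Integrable (fun ω => rexp m * rexp (s * Real.sqrt (Y ω) * N ω)) P :=
      J1.const_mul _
    rw [hfun, integral_add K1 (integrable_const _), integral_const_mul, I1,
      integral_const, probReal_univ, one_smul, hτ', ← hφ1]
    ring
  · have hfun2 : (fun ω => (rexp (s * Real.sqrt (Y ω) * N ω + m) + τ - μ) ^ 2)
        = fun ω => rexp m ^ 2 * rexp (2 * s * Real.sqrt (Y ω) * N ω)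
          - (2 * rexp m ^ 2 * φ1) * rexp (s * Real.sqrt (Y ω) * N ω)
          + (rexp m * φ1) ^ 2 := by
      funext ω; rw [e2 ω, Real.exp_add, hτ']; ring
    have Ka : Integrable (fun ω => rexp m ^ 2 * rexp (2 * s * Real.sqrt (Y ω) * N ω)) P :=
      J2.const_mul _
    have Kb : Integrable (fun ω => (2 * rexp m ^ 2 * φ1) * rexp (s * Real.sqrt (Y ω) * N ω)) P :=
      J1.const_mul _
    have Kab : Integrable (fun ω => rexp m ^ 2 * rexp (2 * s * Real.sqrt (Y ω) * N ω)
        - (2 * rexp m ^ 2 * φ1) * rexp (s * Real.sqrt (Y ω) * N ω)) P := Ka.sub Kb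
    rw [hfun2, integral_add Kab (integrable_const _),
      integral_sub Ka Kb, integral_const_mul, integral_const_mul,
      I1, I2, integral_const, probReal_univ, one_smul, hAm, ← hφ1, ← hφ2]
    field_simp
    linear_combination (-1) * hD2
  · have hfun3 : (fun ω => (rexp (s * Real.sqrt (Y ω) * N ω + m) + τ - μ) ^ 3)
        = fun ω => rexp m ^ 3 * rexp (3 * s * Real.sqrt (Y ω) * N ω)
          - (3 * rexp m ^ 3 * φ1) * rexp (2 * s * Real.sqrt (Y ω) * N ω)
          + (3 * rexp m ^ 3 * φ1 ^ 2) * rexp (s * Real.sqrt (Y ω) * N ω)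
          + (-(rexp m * φ1) ^ 3) := by
      funext ω; rw [e3 ω, e2 ω, Real.exp_add, hτ']; ring
    have Ka : Integrable (fun ω => rexp m ^ 3 * rexp (3 * s * Real.sqrt (Y ω) * N ω)) P :=
      J3.const_mul _
    have Kb : Integrable (fun ω => (3 * rexp m ^ 3 * φ1) * rexp (2 * s * Real.sqrt (Y ω) * N ω)) P :=
      J2.const_mul _
    have Kc : Integrable (fun ω => (3 * rexp m ^ 3 * φ1 ^ 2) * rexp (s * Real.sqrt (Y ω) * N ω)) P :=
      J1.const_mul _
    have Kab : Integrable (fun ω => rexp m ^ 3 * rexp (3 * s * Real.sqrt (Y ω) * N ω)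
        - (3 * rexp m ^ 3 * φ1) * rexp (2 * s * Real.sqrt (Y ω) * N ω)) P := Ka.sub Kb
    have Kabc : Integrable (fun ω => rexp m ^ 3 * rexp (3 * s * Real.sqrt (Y ω) * N ω)
        - (3 * rexp m ^ 3 * φ1) * rexp (2 * s * Real.sqrt (Y ω) * N ω)
        + (3 * rexp m ^ 3 * φ1 ^ 2) * rexp (s * Real.sqrt (Y ω) * N ω)) P := Kab.add Kc
    rw [hfun3, integral_add Kabc (integrable_const _), integral_add Kab Kc,
      integral_sub Ka Kb, integral_const_mul, integral_const_mul,
      integral_const_mul, I1, I2, I3, integral_const, probReal_univ,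
      one_smul, hAm, ← hφ1, ← hφ2, ← hφ3]
    have hφ3eq : φ3 = η * D ^ 3 + 3 * φ1 * φ2 - 2 * φ1 ^ 3 := by linarith
    rw [hφ3eq]
    field_simp
    ring
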